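/- Let φ₁ : ℝᵖ → ℝ be differentiable with L-Lipschitz gradient, φ₂ proper lsc, 0 < γ < 1/L. Suppose a sequence sᵏ → s⋆, with uᵏ = prox_{γφ₁}(sᵏ), vᵏ ∈ prox_{γφ₂}(2uᵏ−sᵏ), uᵏ − vᵏ → 0, uᵏ → u⋆, vᵏ → u⋆, and u⋆ is a strong local minimum of φ = φ₁ + φ₂ with φ(u⋆) = φ⋆ = lim_k φ^γ_DR(sᵏ). Then there exists δ > 0 such that for all sufficiently large k, φ^γ_DR(sᵏ) − φ⋆ ≥ (δ/2)‖sᵏ − s⋆‖², where s⋆ = u⋆ + γ∇φ₁(u⋆). Explicitly one may take δ = μ(1−γL)/((1−γ(L−μ))(1+γL)²), where μ is the strong local minimality modulus. -/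

import Mathlib

open scoped RealInnerProductSpace
open Filter Topology

/-- The convex (Fenchel) conjugate of an extended-real-valued function. -/
noncomputable def eConj {n : ℕ} (h : EuclideanSpace ℝ (Fin n) → EReal)
    (y : EuclideanSpace ℝ (Fin n)) : EReal :=
  ⨆ x, ((⟪y, x⟫ : ℝ) : EReal) - h x

/-- `h` is proper: nowhere `⊥` and not identically `⊤`. -/
def ProperFn {n : ℕ} (h : EuclideanSpace ℝ (Fin n) → EReal) : Prop :=
  (∃ x, h x ≠ ⊤) ∧ ∀ x, h x ≠ ⊥

/-- Convexity for extended-real-valued functions. -/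
def EConvexOn {n : ℕ} (h : EuclideanSpace ℝ (Fin n) → EReal) : Prop :=
  ∀ x y : EuclideanSpace ℝ (Fin n), ∀ a b : ℝ, 0 ≤ a → 0 ≤ b → a + b = 1 →
    h (a • x + b • y) ≤ (a : EReal) * h x + (b : EReal) * h y

/-- `u ∈ prox_{γ h}(x)` for an extended-real-valued `h`. -/
def IsProx {n : ℕ} (h : EuclideanSpace ℝ (Fin n) → EReal) (γ : ℝ)
    (x u : EuclideanSpace ℝ (Fin n)) : Prop :=
  ∀ w, h u + ((‖u - x‖ ^ 2 / (2 * γ) : ℝ) : EReal) ≤ h w + ((‖w - x‖ ^ 2 / (2 * γ) : ℝ) : EReal)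

/-- `u = prox_{γ h}(x)` for a real-valued `h`. -/
def IsProxR {n : ℕ} (h : EuclideanSpace ℝ (Fin n) → ℝ) (γ : ℝ)
    (x u : EuclideanSpace ℝ (Fin n)) : Prop :=
  ∀ w, h u + ‖u - x‖ ^ 2 / (2 * γ) ≤ h w + ‖w - x‖ ^ 2 / (2 * γ)

/-- The Moreau envelope `h^γ`. -/
noncomputable def moreauEnv {n : ℕ} (h : EuclideanSpace ℝ (Fin n) → EReal) (γ : ℝ)
    (x : EuclideanSpace ℝ (Fin n)) : EReal :=
  ⨅ w, h w + ((‖w - x‖ ^ 2 / (2 * γ) : ℝ) : EReal)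

/-- The Douglas–Rachford envelope value at `s`, given the prox points `u, v`. -/
noncomputable def dre {n : ℕ} (φ₁ φ₂ : EuclideanSpace ℝ (Fin n) → EReal) (γ : ℝ)
    (s u v : EuclideanSpace ℝ (Fin n)) : EReal :=
  φ₁ u + φ₂ v + (((1 / γ) * ⟪s - u, v - u⟫ + ‖v - u‖ ^ 2 / (2 * γ) : ℝ) : EReal)

/-- `v` belongs to the regular (Fréchet) subdifferential of `h` at `x̄`. -/
def RegSubdiffAt {n : ℕ} (h : EuclideanSpace ℝ (Fin n) → EReal)
    (xbar v : EuclideanSpace ℝ (Fin n)) : Prop :=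
  ∀ ε : ℝ, 0 < ε → ∀ᶠ x in nhds xbar,
    h xbar + ((⟪v, x - xbar⟫ - ε * ‖x - xbar‖ : ℝ) : EReal) ≤ h x

/-- `μ`-strong convexity for extended-real-valued functions. -/
def EStrongConvexOn {n : ℕ} (μ : ℝ) (h : EuclideanSpace ℝ (Fin n) → EReal) : Prop :=
  EConvexOn (fun x => h x - ((μ / 2 * ‖x‖ ^ 2 : ℝ) : EReal))


lemma prox_grad {n : ℕ} (φ₁ : EuclideanSpace ℝ (Fin n) → ℝ)
    (f' : EuclideanSpace ℝ (Fin n) → EuclideanSpace ℝ (Fin n))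
    (hdiff : ∀ x, HasGradientAt φ₁ (f' x) x) (γ : ℝ) (hγ0 : 0 < γ)
    (s u : EuclideanSpace ℝ (Fin n)) (hu : IsProxR φ₁ γ s u) :
    s - u = γ • f' u := by
  have h1 : HasFDerivAt φ₁ (InnerProductSpace.toDual ℝ _ (f' u)) u :=
    hasGradientAt_iff_hasFDerivAt.mp (hdiff u)
  have h2 : HasFDerivAt (fun w : EuclideanSpace ℝ (Fin n) => ‖w - s‖ ^ 2)
      (2 • (innerSL ℝ (u - s)).comp (ContinuousLinearMap.id ℝ _)) u :=
    ((hasFDerivAt_id u).sub_const s).norm_sq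
  have hfd : HasFDerivAt (fun w => φ₁ w + ‖w - s‖ ^ 2 / (2 * γ))
      ((InnerProductSpace.toDual ℝ _ (f' u)) +
        (2 * γ)⁻¹ • (2 • (innerSL ℝ (u - s)).comp (ContinuousLinearMap.id ℝ _))) u := by
    have := h1.add (h2.mul_const ((2 * γ)⁻¹))
    simp only [div_eq_mul_inv]
    exact this
  have hmin : IsLocalMin (fun w => φ₁ w + ‖w - s‖ ^ 2 / (2 * γ)) u :=
    Filter.Eventually.of_forall hu
  have hz := hmin.hasFDerivAt_eq_zero hfd
  set z : EuclideanSpace ℝ (Fin n) := γ • f' u + (u - s) with hzdef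
  have hev := DFunLike.congr_fun hz z
  simp only [ContinuousLinearMap.add_apply, ContinuousLinearMap.zero_apply,
    ContinuousLinearMap.smul_apply, ContinuousLinearMap.coe_comp', Function.comp_apply,
    ContinuousLinearMap.coe_id', id_eq, innerSL_apply_apply,
    InnerProductSpace.toDual_apply_apply, smul_eq_mul, nsmul_eq_mul, Nat.cast_ofNat] at hev
  have hγ : γ ≠ 0 := ne_of_gt hγ0
  have hzz : ⟪z, z⟫ = 0 := by
    have heq : ⟪z, z⟫ = γ * ⟪f' u, z⟫ + ⟪u - s, z⟫ := by
      rw [hzdef, inner_add_left, real_inner_smul_left]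
    rw [heq]
    set A := (⟪f' u, z⟫ : ℝ) with hA
    set B := (⟪u - s, z⟫ : ℝ) with hB
    have hev' : A + (2 * γ)⁻¹ * (2 * B) = 0 := by
      rw [hA, hB]; linarith [hev]
    have h5 : (2 * γ)⁻¹ * (2 * B) = B / γ := by field_simp
    rw [h5] at hev'
    have : B / γ * γ = B := div_mul_cancel₀ B hγ
    nlinarith [hev', this]
  have hz0 : z = 0 := by rwa [inner_self_eq_zero] at hzz
  have h4 : γ • f' u = s - u := by
    have h3 := hz0
    rw [hzdef] at h3
    have := add_eq_zero_iff_eq_neg.mp h3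
    rw [this, neg_sub]
  exact h4.symm

lemma descent_lemma {n : ℕ} (φ₁ : EuclideanSpace ℝ (Fin n) → ℝ)
    (f' : EuclideanSpace ℝ (Fin n) → EuclideanSpace ℝ (Fin n)) (L : ℝ)
    (hdiff : ∀ x, HasGradientAt φ₁ (f' x) x)
    (hlip : ∀ x y, ‖f' x - f' y‖ ≤ L * ‖x - y‖)
    (u d : EuclideanSpace ℝ (Fin n)) :
    φ₁ (u + d) ≤ φ₁ u + ⟪f' u, d⟫ + L / 2 * ‖d‖ ^ 2 := by
  set g : ℝ → ℝ := fun t => φ₁ (u + t • d) - t * ⟪f' u, d⟫ - t ^ 2 * (L / 2 * ‖d‖ ^ 2) with hg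
  have hline : ∀ t : ℝ, HasDerivAt (fun t : ℝ => u + t • d) d t := by
    intro t
    simpa using ((hasDerivAt_id t).smul_const d).const_add u
  have hgd : ∀ t : ℝ, HasDerivAt g
      (⟪f' (u + t • d), d⟫ - ⟪f' u, d⟫ - 2 * t * (L / 2 * ‖d‖ ^ 2)) t := by
    intro t
    have h1 : HasDerivAt (fun t : ℝ => φ₁ (u + t • d)) ⟪f' (u + t • d), d⟫ t := by
      have := (hasGradientAt_iff_hasFDerivAt.mp
        (hdiff (u + t • d))).comp_hasDerivAt t (hline t)
      simpa [InnerProductSpace.toDual_apply_apply, Function.comp_def] using this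
    have h2 : HasDerivAt (fun t : ℝ => t * ⟪f' u, d⟫) ⟪f' u, d⟫ t := by
      simpa using (hasDerivAt_id t).mul_const (⟪f' u, d⟫ : ℝ)
    have h3 : HasDerivAt (fun t : ℝ => t ^ 2 * (L / 2 * ‖d‖ ^ 2))
        (2 * t * (L / 2 * ‖d‖ ^ 2)) t := by
      simpa [mul_comm] using (hasDerivAt_pow 2 t).mul_const (L / 2 * ‖d‖ ^ 2)
    exact (h1.sub h2).sub h3
  have hanti : AntitoneOn g (Set.Icc 0 1) := by
    apply antitoneOn_of_deriv_nonpos (convex_Icc 0 1)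
    · exact fun t _ => ((hgd t).differentiableAt).continuousAt.continuousWithinAt
    · exact fun t _ => ((hgd t).differentiableAt).differentiableWithinAt
    · intro t ht
      rw [interior_Icc] at ht
      rw [(hgd t).deriv]
      have hcs : ⟪f' (u + t • d) - f' u, d⟫ ≤ ‖f' (u + t • d) - f' u‖ * ‖d‖ :=
        real_inner_le_norm _ _
      have hlipb : ‖f' (u + t • d) - f' u‖ ≤ L * (t * ‖d‖) := by
        have := hlip (u + t • d) u
        simpa [norm_smul, abs_of_nonneg (le_of_lt ht.1)] using this
      have hsub : ⟪f' (u + t • d) - f' u, d⟫ = ⟪f' (u + t • d), d⟫ - ⟪f' u, d⟫ :=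
        inner_sub_left _ _ _
      nlinarith [norm_nonneg d, norm_nonneg (f' (u + t • d) - f' u), ht.1.le]
  have h01 := hanti (Set.left_mem_Icc.mpr zero_le_one) (Set.right_mem_Icc.mpr zero_le_one) zero_le_one
  simp only [hg, one_smul, one_pow, zero_smul, add_zero, zero_pow, zero_mul, sub_zero, one_mul] at h01
  linarith [h01]

/-- Quadratic growth of the DRE near a strong local minimum along the iterates:
`φ^γ_DR(sᵏ) − φ⋆ ≥ (δ/2)‖sᵏ − s⋆‖²` eventually, with
`δ = μ(1−γL)/((1−γ(L−μ))(1+γL)²)` and `s⋆ = u⋆ + γ∇φ₁(u⋆)`. -/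
theorem dre_quadratic_growth {n : ℕ} (φ₁ : EuclideanSpace ℝ (Fin n) → ℝ)
    (f' : EuclideanSpace ℝ (Fin n) → EuclideanSpace ℝ (Fin n)) (L μ : ℝ)
    (hL : 0 < L) (hμ : 0 < μ)
    (hdiff : ∀ x, HasGradientAt φ₁ (f' x) x)
    (hlip : ∀ x y, ‖f' x - f' y‖ ≤ L * ‖x - y‖)
    (φ₂ : EuclideanSpace ℝ (Fin n) → EReal)
    (h2p : ProperFn φ₂) (h2l : LowerSemicontinuous φ₂)
    (γ : ℝ) (hγ0 : 0 < γ) (hγ : γ < 1 / L)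
    (s u v : ℕ → EuclideanSpace ℝ (Fin n)) (ustar : EuclideanSpace ℝ (Fin n))
    (hu : ∀ k, IsProxR φ₁ γ (s k) (u k))
    (hv : ∀ k, IsProx φ₂ γ ((2 : ℝ) • u k - s k) (v k))
    (hres : Tendsto (fun k => u k - v k) atTop (nhds 0))
    (huconv : Tendsto u atTop (nhds ustar))
    (hvconv : Tendsto v atTop (nhds ustar))
    (hsconv : Tendsto s atTop (nhds (ustar + γ • f' ustar)))
    (φstar : ℝ)
    -- `u⋆` is a strong local minimum of `φ = φ₁ + φ₂` with modulus `μ` and `φ(u⋆) = φ⋆`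
    (hstrmin : ∀ᶠ x in nhds ustar,
      (φstar : EReal) + ((μ / 2 * ‖x - ustar‖ ^ 2 : ℝ) : EReal) ≤ ((φ₁ x : ℝ) : EReal) + φ₂ x)
    (hval : ((φ₁ ustar : ℝ) : EReal) + φ₂ ustar = (φstar : EReal))
    -- `φ⋆ = lim_k φ^γ_DR(sᵏ)`
    (hlim : Tendsto (fun k => dre (fun x => ((φ₁ x : ℝ) : EReal)) φ₂ γ (s k) (u k) (v k))
      atTop (nhds (φstar : EReal))) :
    ∃ N : ℕ, ∀ k ≥ N,
      ((μ * (1 - γ * L) / ((1 - γ * (L - μ)) * (1 + γ * L) ^ 2) / 2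
          * ‖s k - (ustar + γ • f' ustar)‖ ^ 2 : ℝ) : EReal)
        ≤ dre (fun x => ((φ₁ x : ℝ) : EReal)) φ₂ γ (s k) (u k) (v k) - (φstar : EReal) := by
  -- basic positivity facts
  have hγL : γ * L < 1 := by
    have := (lt_div_iff₀ hL).mp hγ
    linarith
  have hP : (0:ℝ) < 1 - γ * L := by linarith
  have hT : (0:ℝ) < 1 + γ * L := by positivity
  have hPQ : (0:ℝ) < 1 - γ * (L - μ) := by nlinarith
  have hγne : γ ≠ 0 := ne_of_gt hγ0
  -- eventual strong minimality along v k
  obtain ⟨N, hN⟩ := Filter.eventually_atTop.mp (hvconv.eventually hstrmin)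
  refine ⟨N, fun k hk => ?_⟩
  -- the gradient step identity
  have hsu : s k - u k = γ • f' (u k) := prox_grad φ₁ f' hdiff γ hγ0 (s k) (u k) (hu k)
  set a := ‖v k - u k‖ with ha
  set b := ‖v k - ustar‖ with hb
  set S := ‖s k - (ustar + γ • f' ustar)‖ with hS
  -- bound on ‖s k - s⋆‖
  have hSle : S ≤ (1 + γ * L) * (a + b) := by
    have he : s k - (ustar + γ • f' ustar)
        = (u k - ustar) + γ • (f' (u k) - f' ustar) := by
      rw [smul_sub, ← hsu]; abel
    have h1 : S ≤ ‖u k - ustar‖ + γ * (L * ‖u k - ustar‖) := by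
      rw [hS, he]
      refine le_trans (norm_add_le _ _) ?_
      have h2 : ‖γ • (f' (u k) - f' ustar)‖ = γ * ‖f' (u k) - f' ustar‖ := by
        rw [norm_smul, Real.norm_eq_abs, abs_of_pos hγ0]
      rw [h2]
      have := hlip (u k) ustar
      nlinarith
    have h3 : ‖u k - ustar‖ ≤ a + b := by
      have he2 : u k - ustar = -(v k - u k) + (v k - ustar) := by abel
      rw [he2]
      refine le_trans (norm_add_le _ _) ?_
      rw [norm_neg]
    nlinarith [norm_nonneg (u k - ustar)]
  -- descent inequality
  have hdes : φ₁ (v k) ≤ φ₁ (u k) + ⟪f' (u k), v k - u k⟫ + L / 2 * a ^ 2 := by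
    have := descent_lemma φ₁ f' L hdiff hlip (u k) (v k - u k)
    have he : u k + (v k - u k) = v k := by abel
    rwa [he] at this
  -- the inner product in the DRE
  have hCin : (1 / γ) * ⟪s k - u k, v k - u k⟫ = ⟪f' (u k), v k - u k⟫ := by
    rw [hsu, real_inner_smul_left]
    field_simp
  -- main real-valued estimate
  have hmain : ∀ r : ℝ, φstar + μ / 2 * b ^ 2 ≤ φ₁ (v k) + r →
      μ * (1 - γ * L) / ((1 - γ * (L - μ)) * (1 + γ * L) ^ 2) / 2 * S ^ 2
        ≤ φ₁ (u k) + r + ((1 / γ) * ⟪s k - u k, v k - u k⟫ + a ^ 2 / (2 * γ)) - φstar := by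
    intro r hsm
    set δ := μ * (1 - γ * L) / ((1 - γ * (L - μ)) * (1 + γ * L) ^ 2) with hδ
    have hδ0 : 0 ≤ δ := by positivity
    have step1 : δ / 2 * S ^ 2 ≤ δ / 2 * ((1 + γ * L) * (a + b)) ^ 2 := by
      have h1 : S ^ 2 ≤ ((1 + γ * L) * (a + b)) ^ 2 :=
        pow_le_pow_left₀ (norm_nonneg _) hSle 2
      exact mul_le_mul_of_nonneg_left h1 (by positivity)
    have step2 : δ / 2 * ((1 + γ * L) * (a + b)) ^ 2
        = μ * (1 - γ * L) * (a + b) ^ 2 / (2 * (1 - γ * (L - μ))) := by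
      rw [hδ]
      field_simp
    have step3 : μ * (1 - γ * L) * (a + b) ^ 2 / (2 * (1 - γ * (L - μ)))
        ≤ μ / 2 * b ^ 2 + (1 - γ * L) / (2 * γ) * a ^ 2 := by
      rw [← mul_le_mul_iff_of_pos_right (show (0:ℝ) < 2 * γ * (1 - γ * (L - μ)) by positivity)]
      have eL : μ * (1 - γ * L) * (a + b) ^ 2 / (2 * (1 - γ * (L - μ)))
          * (2 * γ * (1 - γ * (L - μ))) = γ * μ * (1 - γ * L) * (a + b) ^ 2 := by
        field_simp
      have eR : (μ / 2 * b ^ 2 + (1 - γ * L) / (2 * γ) * a ^ 2)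
          * (2 * γ * (1 - γ * (L - μ)))
          = γ * μ * (1 - γ * (L - μ)) * b ^ 2
            + (1 - γ * L) * (1 - γ * (L - μ)) * a ^ 2 := by
        field_simp
      rw [eL, eR]
      linarith only [sq_nonneg ((1 - γ * L) * a - γ * μ * b)]
    have hRHS : μ / 2 * b ^ 2 + (1 - γ * L) / (2 * γ) * a ^ 2
        ≤ φ₁ (u k) + r + ((1 / γ) * ⟪s k - u k, v k - u k⟫ + a ^ 2 / (2 * γ)) - φstar := by
      rw [hCin]
      have h1 : (1 - γ * L) / (2 * γ) * a ^ 2 = a ^ 2 / (2 * γ) - L / 2 * a ^ 2 := by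
        field_simp
      linarith [hdes, hsm]
    calc δ / 2 * S ^ 2 ≤ δ / 2 * ((1 + γ * L) * (a + b)) ^ 2 := step1
      _ = μ * (1 - γ * L) * (a + b) ^ 2 / (2 * (1 - γ * (L - μ))) := step2
      _ ≤ μ / 2 * b ^ 2 + (1 - γ * L) / (2 * γ) * a ^ 2 := step3
      _ ≤ _ := hRHS
  -- move to EReal
  by_cases htop : φ₂ (v k) = ⊤
  · rw [dre, htop]
    rw [EReal.coe_add_top, EReal.top_add_coe, EReal.top_sub_coe]
    exact le_top
  · have hbot := h2p.2 (v k)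
    set r := (φ₂ (v k)).toReal with hrdef
    have hr : φ₂ (v k) = (r : EReal) := (EReal.coe_toReal htop hbot).symm
    have hsm : φstar + μ / 2 * b ^ 2 ≤ φ₁ (v k) + r := by
      have := hN k hk
      rw [hr] at this
      rw [← EReal.coe_add, ← EReal.coe_add, EReal.coe_le_coe_iff] at this
      linarith [this]
    have := hmain r hsm
    rw [dre, hr]
    rw [← EReal.coe_add, ← EReal.coe_add, ← EReal.coe_sub, EReal.coe_le_coe_iff]
    exact this
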